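/- Let G be a finite EPPO-group and N a normal subgroup of G. Then the product of p^(α_p) over all primes p dividing |G| but not dividing |N|, where p^(α_p) is the p-part of |G|, divides |N| − 1. -/

import Mathlib

/-- A group is an EPPO-group if every element has prime power order. -/
def IsEPPOGroup (G : Type*) [Group G] : Prop :=
  ∀ g : G, ∃ (p n : ℕ), p.Prime ∧ orderOf g = p ^ n

open MulAction in
lemma free_action_card_dvd {α β : Type*} [Group α] [Finite α] [MulAction α β] [Finite β]
    (h : ∀ (a : α) (b : β), a • b = b → a = 1) :
    Nat.card α ∣ Nat.card β := by
  classical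
  cases nonempty_fintype α
  cases nonempty_fintype β
  have horb : ∀ b : β, Nat.card (orbit α b) = Nat.card α := by
    intro b
    have hstab : stabilizer α b = ⊥ := by
      ext a
      simp only [mem_stabilizer_iff, Subgroup.mem_bot]
      exact ⟨fun ha => h a b ha, fun ha => by simp [ha]⟩
    calc Nat.card (orbit α b) = Nat.card (α ⧸ stabilizer α b) :=
          Nat.card_congr (orbitEquivQuotientStabilizer α b)
      _ = Nat.card α := by
          rw [hstab]
          exact Nat.card_congr (QuotientGroup.quotientBot (G := α)).toEquiv
  have : Fintype (orbitRel.Quotient α β) := Fintype.ofFinite _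
  have : ∀ ω : orbitRel.Quotient α β, Fintype (orbit α ω.out) := fun ω => Fintype.ofFinite _
  have key := Nat.card_congr (selfEquivSigmaOrbits α β)
  rw [Nat.card_eq_fintype_card (α := (Σ ω : orbitRel.Quotient α β, orbit α ω.out)),
    Fintype.card_sigma] at key
  have : Nat.card β = (Fintype.card (orbitRel.Quotient α β)) * Nat.card α := by
    rw [key, Finset.sum_congr rfl (fun ω _ => ?_), Finset.sum_const, smul_eq_mul,
      Finset.card_univ]
    rw [← Nat.card_eq_fintype_card, horb]
  rw [this]
  exact Dvd.intro_left _ rfl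

lemma nat_coprime_prod_dvd {s : Finset ℕ} {f : ℕ → ℕ} {n : ℕ}
    (hc : (s : Set ℕ).Pairwise (Function.onFun Nat.Coprime f)) (h : ∀ p ∈ s, f p ∣ n) :
    (∏ p ∈ s, f p) ∣ n := by
  classical
  induction s using Finset.induction_on with
  | empty => simpa using one_dvd n
  | @insert a t ha ih =>
    rw [Finset.prod_insert ha]
    have hcop : Nat.Coprime (f a) (∏ p ∈ t, f p) :=
      Nat.Coprime.prod_right fun i hi =>
        hc (by simp) (by simp [hi]) (by rintro rfl; exact ha hi)
    exact hcop.mul_dvd_of_dvd_of_dvd (h a (by simp))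
      (ih (hc.mono (by intro x hx; simp at hx ⊢; tauto)) (fun p hp => h p (by simp [hp])))

lemma pPart_dvd_card_sub_one {G : Type*} [Group G] [Finite G]
    (hG : IsEPPOGroup G) (N : Subgroup G) [N.Normal]
    {p : ℕ} (hp : p.Prime) (hpN : ¬ p ∣ Nat.card N) :
    p ^ ((Nat.card G).factorization p) ∣ Nat.card N - 1 := by
  haveI : Fact p.Prime := ⟨hp⟩
  obtain ⟨P⟩ : Nonempty (Sylow p G) := inferInstance
  letI : SMul P {n : N // n ≠ 1} :=
    ⟨fun g x => ⟨MulAut.conjNormal (g : G) x.1, fun hx => x.2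
      ((MulAut.conjNormal (G := G) (g : G)).injective
        (a₁ := x.1) (a₂ := 1) (by rw [hx, map_one]))⟩⟩
  letI : MulAction P {n : N // n ≠ 1} :=
    { one_smul := fun x => by
        ext
        show ((MulAut.conjNormal (((1 : P) : G)) x.1 : N) : G) = (x.1 : G)
        simp
      mul_smul := fun g h x => by
        ext
        show ((MulAut.conjNormal (((g * h : P) : G)) x.1 : N) : G)
          = ((MulAut.conjNormal ((g : G)) (MulAut.conjNormal ((h : G)) x.1) : N) : G)
        simp [MulAut.conjNormal_apply, mul_assoc] }
  have hfree : ∀ (g : P) (x : {n : N // n ≠ 1}), g • x = x → g = 1 := by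
    intro g x hgx
    by_contra hg1
    set a : G := (g : G) with ha
    set b : G := ((x.1 : N) : G) with hb
    have hconj : a * b * a⁻¹ = b := by
      have h2 : (((g • x).1 : N) : G) = ((x.1 : N) : G) := by rw [hgx]
      rw [show ((g • x).1 : N) = MulAut.conjNormal a x.1 from rfl] at h2
      simpa [MulAut.conjNormal_apply] using h2
    have hcomm : Commute a b := by
      rw [Commute, SemiconjBy]
      calc a * b = (a * b * a⁻¹) * a := by group
        _ = b * a := by rw [hconj]
    -- order of a is a positive power of p
    obtain ⟨k, hk⟩ := P.isPGroup' g
    have hadvd : orderOf a ∣ p ^ k := by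
      rw [ha, orderOf_submonoid]
      exact orderOf_dvd_of_pow_eq_one hk
    obtain ⟨m, -, hm⟩ := (Nat.dvd_prime_pow hp).mp hadvd
    have ha1 : a ≠ 1 := fun h1 => hg1 (by
      ext
      simpa [ha] using h1)
    have hm0 : m ≠ 0 := by
      rintro rfl
      exact ha1 (orderOf_eq_one_iff.mp (by simpa using hm))
    have hpa : p ∣ orderOf a := hm ▸ dvd_pow_self p hm0
    -- order of b is coprime to p
    have hbdvd : orderOf b ∣ Nat.card N := by
      rw [hb, orderOf_submonoid]
      exact orderOf_dvd_natCard _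
    have hpb : ¬ p ∣ orderOf b := fun hd => hpN (hd.trans hbdvd)
    have hcop : Nat.Coprime (orderOf a) (orderOf b) := by
      rw [hm]
      exact (Nat.Prime.coprime_iff_not_dvd hp |>.mpr hpb).pow_left m
    have horder : orderOf (a * b) = orderOf a * orderOf b :=
      hcomm.orderOf_mul_eq_mul_orderOf_of_coprime hcop
    obtain ⟨q, j, hq, hqj⟩ := hG (a * b)
    have hpq : p = q := by
      have : p ∣ q ^ j := by
        rw [← hqj, horder]
        exact hpa.mul_right _
      exact (Nat.prime_dvd_prime_iff_eq hp hq).mp (hp.dvd_of_dvd_pow this)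
    have hbq : orderOf b ∣ p ^ j := by
      rw [hpq, ← hqj, horder]
      exact Dvd.intro_left _ rfl
    have hb1 : orderOf b = 1 :=
      Nat.eq_one_of_dvd_coprimes
        (((Nat.Prime.coprime_iff_not_dvd hp |>.mpr hpb).symm.pow_right j)) dvd_rfl hbq
    exact x.2 (by
      ext
      simpa [hb] using orderOf_eq_one_iff.mp hb1)
  have hdvd := free_action_card_dvd (α := P) (β := {n : N // n ≠ 1}) hfree
  have hcardP : Nat.card P = p ^ ((Nat.card G).factorization p) :=
    Sylow.card_eq_multiplicity P
  have hcardX : Nat.card {n : N // n ≠ 1} = Nat.card N - 1 := by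
    classical
    cases nonempty_fintype N
    rw [Nat.card_eq_fintype_card, Nat.card_eq_fintype_card,
      Fintype.card_subtype_compl (p := fun n : N => n = 1), Fintype.card_subtype_eq]
  rwa [hcardP, hcardX] at hdvd

theorem prod_pParts_dvd_card_normal_sub_one {G : Type*} [Group G] [Finite G]
    (hG : IsEPPOGroup G) (N : Subgroup G) [N.Normal] :
    (∏ p ∈ (Nat.card G).primeFactors.filter (fun p => ¬ p ∣ Nat.card N),
        p ^ ((Nat.card G).factorization p)) ∣ (Nat.card N - 1) := by
  apply nat_coprime_prod_dvd
  · intro x hx y hy hxy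
    simp only [Finset.coe_filter, Set.mem_setOf_eq, Finset.mem_filter] at hx hy
    exact Nat.Coprime.pow _ _
      ((Nat.coprime_primes (Nat.prime_of_mem_primeFactors hx.1)
        (Nat.prime_of_mem_primeFactors hy.1)).mpr hxy)
  · intro q hq
    rw [Finset.mem_filter] at hq
    exact pPart_dvd_card_sub_one hG N (Nat.prime_of_mem_primeFactors hq.1) hq.2
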